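/- Let γ be the Gauss measure on ℝⁿ, a > 0, β ∈ (0,1). With I_a^β as above, there is a constant C such that for all f ∈ L¹(γ) and λ > 0, γ({x : |I_a^β(|f|)(x)| > λ}) ≤ C (‖f‖_{L¹(γ)}/λ)^{1/(1-β)}; i.e. I_a^β is bounded from L¹(γ) to weak L^{1/(1-β)}(γ). -/

import Mathlib

open MeasureTheory Metric Real ENNReal

/-- `m(x) = min{1, 1/|x|}`. -/
noncomputable def mfun {n : ℕ} (x : EuclideanSpace ℝ (Fin n)) : ℝ := min 1 ‖x‖⁻¹

/-- The Gauss measure `dγ(x) = π^{-n/2} e^{-|x|²} dx` on `ℝⁿ`. -/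
noncomputable def gauss (n : ℕ) : Measure (EuclideanSpace ℝ (Fin n)) :=
  volume.withDensity fun x => ENNReal.ofReal (Real.pi ^ (-(n : ℝ) / 2) * Real.exp (-‖x‖ ^ 2))

example (n : ℕ) : Measure.IsAddHaarMeasure (volume : Measure (EuclideanSpace ℝ (Fin n))) := inferInstance

namespace Stmt9
variable {n : ℕ}

lemma mfun_nonneg (x : EuclideanSpace ℝ (Fin n)) : 0 ≤ mfun x :=
  le_min zero_le_one (inv_nonneg.2 (norm_nonneg x))

lemma mfun_le_one (x : EuclideanSpace ℝ (Fin n)) : mfun x ≤ 1 := min_le_left _ _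

lemma norm_mul_mfun_le (x : EuclideanSpace ℝ (Fin n)) : ‖x‖ * mfun x ≤ 1 := by
  rcases eq_or_ne x 0 with h | h
  · simp [h]
  · have hx : 0 < ‖x‖ := norm_pos_iff.2 h
    calc ‖x‖ * mfun x ≤ ‖x‖ * ‖x‖⁻¹ := by
          exact mul_le_mul_of_nonneg_left (min_le_right _ _) hx.le
      _ = 1 := mul_inv_cancel₀ hx.ne'

lemma abs_sq_sub_sq {b : ℝ} (hb : 0 ≤ b) (z c : EuclideanSpace ℝ (Fin n))
    (h : dist z c ≤ b * mfun c) : |‖z‖ ^ 2 - ‖c‖ ^ 2| ≤ 2 * b + b ^ 2 := by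
  have h1 : |‖z‖ - ‖c‖| ≤ b * mfun c := by
    refine (abs_norm_sub_norm_le z c).trans ?_
    rw [← dist_eq_norm]; exact h
  have h2 := norm_mul_mfun_le c
  have h3 := mfun_nonneg c
  have h4 := mfun_le_one c
  have h5 := abs_le.1 h1
  have h6 : 0 ≤ ‖c‖ := norm_nonneg c
  set d := ‖z‖ - ‖c‖ with hd
  have habs : |d| ≤ b * mfun c := h1
  have hd1 : d ^ 2 ≤ b ^ 2 := by
    have : |d| ^ 2 ≤ (b * mfun c) ^ 2 := by
      exact pow_le_pow_left₀ (abs_nonneg d) habs 2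
    rw [sq_abs] at this
    have hm2 : mfun c * mfun c ≤ 1 := mul_le_one₀ h4 h3 h4
    nlinarith [mul_le_mul_of_nonneg_left hm2 (sq_nonneg b)]
  have hcd : ‖c‖ * |d| ≤ b := by
    have e1 : ‖c‖ * |d| ≤ ‖c‖ * (b * mfun c) := mul_le_mul_of_nonneg_left habs h6
    nlinarith
  have h7 : ‖z‖ ^ 2 - ‖c‖ ^ 2 = d * d + 2 * ‖c‖ * d := by rw [hd]; ring
  have hle : d ≤ |d| := le_abs_self d
  have hge : -|d| ≤ d := neg_abs_le d
  rw [abs_le]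
  constructor <;> nlinarith [sq_nonneg d]

lemma exp_comp {b : ℝ} (hb : 0 ≤ b) {z c : EuclideanSpace ℝ (Fin n)}
    (h : dist z c ≤ b * mfun c) :
    Real.exp (-‖z‖ ^ 2) ≤ Real.exp (2 * b + b ^ 2) * Real.exp (-‖c‖ ^ 2) ∧
      Real.exp (-‖c‖ ^ 2) ≤ Real.exp (2 * b + b ^ 2) * Real.exp (-‖z‖ ^ 2) := by
  have h1 := abs_le.1 (abs_sq_sub_sq hb z c h)
  constructor <;> · rw [← Real.exp_add]; apply Real.exp_le_exp.2; linarith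

lemma mfun_transfer {a : ℝ} (ha : 0 ≤ a) {x y : EuclideanSpace ℝ (Fin n)} (hy : y ≠ 0)
    (h : dist x y ≤ a * mfun x) : dist x y ≤ (a * (1 + a)) * mfun y := by
  have hy' : 0 < ‖y‖ := norm_pos_iff.2 hy
  have h1a : (0:ℝ) < 1 + a := by linarith
  have hxy : ‖y‖ ≤ ‖x‖ + a * mfun x := by
    have := abs_le.1 (abs_norm_sub_norm_le x y)
    rw [← dist_eq_norm] at this
    linarith [this.1]
  have key : mfun x ≤ (1 + a) * mfun y := by
    rcases le_or_gt ‖x‖ 1 with hx | hx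
    · have hyle : ‖y‖ ≤ 1 + a := by
        have := mfun_le_one x; nlinarith [mfun_nonneg x]
      have : (1 + a)⁻¹ ≤ mfun y := by
        apply le_min
        · rw [inv_le_one_iff₀]; right; linarith
        · exact inv_anti₀ hy' hyle
      calc mfun x ≤ 1 := mfun_le_one x
        _ = (1 + a) * (1 + a)⁻¹ := by field_simp
        _ ≤ (1 + a) * mfun y := by exact mul_le_mul_of_nonneg_left this h1a.le
    · have hx0 : 0 < ‖x‖ := by linarith
      have hmx : mfun x = ‖x‖⁻¹ := min_eq_right (by
        rw [inv_le_one_iff₀]; right; linarith)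
      have hyle : ‖y‖ ≤ (1 + a) * ‖x‖ := by
        have : a * mfun x ≤ a * 1 := mul_le_mul_of_nonneg_left (mfun_le_one x) ha
        nlinarith
      have h2 : ((1 + a) * ‖x‖)⁻¹ ≤ mfun y := by
        apply le_min
        · rw [inv_le_one_iff₀]; right; nlinarith
        · exact inv_anti₀ hy' hyle
      rw [hmx]
      calc ‖x‖⁻¹ = (1 + a) * ((1 + a) * ‖x‖)⁻¹ := by
            field_simp
        _ ≤ (1 + a) * mfun y := mul_le_mul_of_nonneg_left h2 h1a.le
  calc dist x y ≤ a * mfun x := h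
    _ ≤ a * ((1 + a) * mfun y) := mul_le_mul_of_nonneg_left key ha
    _ = (a * (1 + a)) * mfun y := by ring

noncomputable def dens {n : ℕ} (x : EuclideanSpace ℝ (Fin n)) : ℝ :=
  Real.pi ^ (-(n : ℝ) / 2) * Real.exp (-‖x‖ ^ 2)

lemma dens_pos (x : EuclideanSpace ℝ (Fin n)) : 0 < dens x :=
  mul_pos (Real.rpow_pos_of_pos Real.pi_pos _) (Real.exp_pos _)

lemma dens_nonneg (x : EuclideanSpace ℝ (Fin n)) : 0 ≤ dens x := (dens_pos x).le

lemma measurable_dens : Measurable fun x : EuclideanSpace ℝ (Fin n) => ENNReal.ofReal (dens x) := by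
  unfold dens
  fun_prop

lemma gauss_apply {s : Set (EuclideanSpace ℝ (Fin n))} (hs : MeasurableSet s) :
    gauss n s = ∫⁻ x in s, ENNReal.ofReal (dens x) ∂volume :=
  withDensity_apply _ hs

/-- Upper bound for the Gauss measure of a small closed ball. -/
lemma gauss_closedBall_le {b : ℝ} (hb : 0 ≤ b) (c : EuclideanSpace ℝ (Fin n)) {r : ℝ}
    (hr0 : 0 ≤ r) (hrb : r ≤ b * mfun c) :
    gauss n (closedBall c r) ≤
      ENNReal.ofReal (Real.exp (2 * b + b ^ 2) * dens c * r ^ n) *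
        volume (ball (0 : EuclideanSpace ℝ (Fin n)) 1) := by
  rw [gauss_apply measurableSet_closedBall]
  have hpt : ∀ x ∈ closedBall c r,
      ENNReal.ofReal (dens x) ≤ ENNReal.ofReal (Real.exp (2 * b + b ^ 2) * dens c) := by
    intro x hx
    apply ENNReal.ofReal_le_ofReal
    have hdist : dist x c ≤ b * mfun c := (mem_closedBall.1 hx).trans hrb
    have := (exp_comp hb hdist).1
    unfold dens
    calc Real.pi ^ (-(n : ℝ) / 2) * Real.exp (-‖x‖ ^ 2)
        ≤ Real.pi ^ (-(n : ℝ) / 2) * (Real.exp (2 * b + b ^ 2) * Real.exp (-‖c‖ ^ 2)) :=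
          mul_le_mul_of_nonneg_left this (Real.rpow_pos_of_pos Real.pi_pos _).le
      _ = Real.exp (2 * b + b ^ 2) * (Real.pi ^ (-(n : ℝ) / 2) * Real.exp (-‖c‖ ^ 2)) := by ring
  calc ∫⁻ x in closedBall c r, ENNReal.ofReal (dens x) ∂volume
      ≤ ∫⁻ _ in closedBall c r, ENNReal.ofReal (Real.exp (2 * b + b ^ 2) * dens c) ∂volume :=
        setLIntegral_mono measurable_const hpt
    _ = ENNReal.ofReal (Real.exp (2 * b + b ^ 2) * dens c) * volume (closedBall c r) :=
        setLIntegral_const _ _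
    _ = ENNReal.ofReal (Real.exp (2 * b + b ^ 2) * dens c) *
          (ENNReal.ofReal (r ^ n) * volume (ball (0 : EuclideanSpace ℝ (Fin n)) 1)) := by
        rw [Measure.addHaar_closedBall _ _ hr0, finrank_euclideanSpace_fin]
    _ = ENNReal.ofReal (Real.exp (2 * b + b ^ 2) * dens c * r ^ n) *
          volume (ball (0 : EuclideanSpace ℝ (Fin n)) 1) := by
        rw [← mul_assoc, ← ENNReal.ofReal_mul
          (mul_nonneg (Real.exp_pos _).le (dens_nonneg c))]

/-- Lower bound for the Gauss measure of a small ball (n ≥ 1). -/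
lemma le_gauss_ball (hn : n ≠ 0) {b : ℝ} (hb : 0 ≤ b) (c : EuclideanSpace ℝ (Fin n)) {r : ℝ}
    (hr0 : 0 ≤ r) (hrb : r ≤ b * mfun c) :
    ENNReal.ofReal ((Real.exp (2 * b + b ^ 2))⁻¹ * dens c * r ^ n) *
        volume (ball (0 : EuclideanSpace ℝ (Fin n)) 1) ≤ gauss n (ball c r) := by
  have : Nonempty (Fin n) := ⟨⟨0, Nat.pos_of_ne_zero hn⟩⟩
  have : Nontrivial (EuclideanSpace ℝ (Fin n)) := inferInstance
  rw [gauss_apply measurableSet_ball]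
  have hpt : ∀ x ∈ ball c r,
      ENNReal.ofReal ((Real.exp (2 * b + b ^ 2))⁻¹ * dens c) ≤ ENNReal.ofReal (dens x) := by
    intro x hx
    apply ENNReal.ofReal_le_ofReal
    have hdist : dist x c ≤ b * mfun c := (mem_ball.1 hx).le.trans hrb
    have h2 := (exp_comp hb hdist).2
    have hexp : (0:ℝ) < Real.exp (2 * b + b ^ 2) := Real.exp_pos _
    rw [inv_mul_le_iff₀ hexp]
    unfold dens
    calc Real.pi ^ (-(n : ℝ) / 2) * Real.exp (-‖c‖ ^ 2)
        ≤ Real.pi ^ (-(n : ℝ) / 2) * (Real.exp (2 * b + b ^ 2) * Real.exp (-‖x‖ ^ 2)) :=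
          mul_le_mul_of_nonneg_left h2 (Real.rpow_pos_of_pos Real.pi_pos _).le
      _ = Real.exp (2 * b + b ^ 2) * (Real.pi ^ (-(n : ℝ) / 2) * Real.exp (-‖x‖ ^ 2)) := by ring
  calc ENNReal.ofReal ((Real.exp (2 * b + b ^ 2))⁻¹ * dens c * r ^ n) *
        volume (ball (0 : EuclideanSpace ℝ (Fin n)) 1)
      = ENNReal.ofReal ((Real.exp (2 * b + b ^ 2))⁻¹ * dens c) *
          (ENNReal.ofReal (r ^ n) * volume (ball (0 : EuclideanSpace ℝ (Fin n)) 1)) := by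
        rw [← mul_assoc, ← ENNReal.ofReal_mul
          (mul_nonneg (inv_nonneg.2 (Real.exp_pos _).le) (dens_nonneg c))]
    _ = ENNReal.ofReal ((Real.exp (2 * b + b ^ 2))⁻¹ * dens c) * volume (ball c r) := by
        rw [Measure.addHaar_ball _ _ hr0, finrank_euclideanSpace_fin]
    _ = ∫⁻ _ in ball c r, ENNReal.ofReal ((Real.exp (2 * b + b ^ 2))⁻¹ * dens c) ∂volume :=
        (setLIntegral_const _ _).symm
    _ ≤ ∫⁻ x in ball c r, ENNReal.ofReal (dens x) ∂volume := by
        exact setLIntegral_mono measurable_dens hpt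

lemma gauss_singleton (hn : n ≠ 0) (y : EuclideanSpace ℝ (Fin n)) : gauss n {y} = 0 := by
  have h : gauss n {y} ≤ ENNReal.ofReal (Real.exp (2 * 1 + 1 ^ 2) * dens y * 0 ^ n) *
      volume (ball (0 : EuclideanSpace ℝ (Fin n)) 1) := by
    have := gauss_closedBall_le (n := n) zero_le_one y le_rfl
      (mul_nonneg zero_le_one (mfun_nonneg y))
    simpa [closedBall_zero] using this
  have : gauss n {y} ≤ 0 := by
    simpa [zero_pow hn] using h
  exact le_antisymm this zero_le

/-- Key covering estimate: the Gauss measure of the set of points `x` near `y`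
where `V(x,y) ≤ t` is at most `C t`. -/
lemma measure_Et (hn : n ≠ 0) {a : ℝ} (ha : 0 < a) {y : EuclideanSpace ℝ (Fin n)}
    (hy : y ≠ 0) (t : ℝ≥0∞) :
    gauss n {x | dist x y < a * mfun x ∧ gauss n (ball x (dist x y)) ≤ t} ≤
      ENNReal.ofReal ((Real.exp (2 * (a * (1 + a)) + (a * (1 + a)) ^ 2)) ^ 3) * t := by
  set b : ℝ := a * (1 + a) with hbdef
  have hb0 : (0:ℝ) ≤ b := by nlinarith
  set κ : ℝ := Real.exp (2 * b + b ^ 2) with hκdef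
  have hκpos : (0:ℝ) < κ := Real.exp_pos _
  rcases eq_or_ne t ∞ with ht | ht
  · rw [ht, ENNReal.mul_top (ENNReal.ofReal_pos.2 (pow_pos (Real.exp_pos _) 3)).ne']
    exact le_top
  set ωE := volume (ball (0 : EuclideanSpace ℝ (Fin n)) 1) with hωEdef
  have hωEpos : 0 < ωE := measure_ball_pos volume 0 one_pos
  have hωEfin : ωE ≠ ∞ := measure_ball_lt_top.ne
  set ωr : ℝ := ωE.toReal with hωrdef
  have hωr : (0:ℝ) < ωr := ENNReal.toReal_pos hωEpos.ne' hωEfin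
  set py : ℝ := Real.pi ^ ((n:ℝ) / 2) with hpydef
  have hpypos : (0:ℝ) < py := Real.rpow_pos_of_pos Real.pi_pos _
  set ey : ℝ := Real.exp (‖y‖ ^ 2) with heydef
  have heypos : (0:ℝ) < ey := Real.exp_pos _
  have hdensy : dens y = py⁻¹ * ey⁻¹ := by
    unfold dens
    rw [hpydef, heydef, ← Real.rpow_neg Real.pi_pos.le, ← Real.exp_neg, neg_div]
  set base : ℝ := t.toReal * ey * κ ^ 2 * py / ωr with hbasedef
  have hbase : (0:ℝ) ≤ base := by positivity
  set ρ₀ : ℝ := base ^ ((n:ℝ)⁻¹) with hρ₀def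
  have hρ₀0 : (0:ℝ) ≤ ρ₀ := Real.rpow_nonneg hbase _
  have hρ₀n : ρ₀ ^ n = base := Real.rpow_inv_natCast_pow hbase hn
  set ρ : ℝ := min ρ₀ (b * mfun y) with hρdef
  have hρ0 : (0:ℝ) ≤ ρ := le_min hρ₀0 (mul_nonneg hb0 (mfun_nonneg y))
  have hab : a ≤ b := by nlinarith
  -- the subset claim
  have key : {x : EuclideanSpace ℝ (Fin n) |
      dist x y < a * mfun x ∧ gauss n (ball x (dist x y)) ≤ t} ⊆ closedBall y ρ := by
    intro x hx
    obtain ⟨hd, hV⟩ := hx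
    set d : ℝ := dist x y with hddef
    have hd0 : (0:ℝ) ≤ d := dist_nonneg
    have hdb : d ≤ b * mfun x :=
      hd.le.trans (mul_le_mul_of_nonneg_right hab (mfun_nonneg x))
    have hdmy : d ≤ b * mfun y := mfun_transfer ha.le hy hd.le
    -- lower bound on V
    have hlow := le_gauss_ball hn hb0 x hd0 hdb
    have hdx : κ⁻¹ * dens y ≤ dens x := by
      have hdyx : dist y x ≤ b * mfun x := by rw [dist_comm]; exact hdb
      have h2 := (exp_comp hb0 hdyx).1
      rw [inv_mul_le_iff₀ hκpos]
      unfold dens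
      calc Real.pi ^ (-(n : ℝ) / 2) * Real.exp (-‖y‖ ^ 2)
          ≤ Real.pi ^ (-(n : ℝ) / 2) * (κ * Real.exp (-‖x‖ ^ 2)) :=
            mul_le_mul_of_nonneg_left h2 (Real.rpow_pos_of_pos Real.pi_pos _).le
        _ = κ * (Real.pi ^ (-(n : ℝ) / 2) * Real.exp (-‖x‖ ^ 2)) := by ring
    have hchain : ENNReal.ofReal (κ⁻¹ * (κ⁻¹ * dens y) * d ^ n) * ωE ≤ t := by
      refine le_trans ?_ (hlow.trans hV)
      refine mul_le_mul_left (ENNReal.ofReal_le_ofReal ?_) _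
      have : κ⁻¹ * (κ⁻¹ * dens y) ≤ κ⁻¹ * dens x :=
        mul_le_mul_of_nonneg_left hdx (inv_nonneg.2 hκpos.le)
      exact mul_le_mul_of_nonneg_right this (pow_nonneg hd0 n)
    have hreal : κ⁻¹ * (κ⁻¹ * dens y) * d ^ n * ωr ≤ t.toReal := by
      rw [← ENNReal.ofReal_le_iff_le_toReal ht]
      calc ENNReal.ofReal (κ⁻¹ * (κ⁻¹ * dens y) * d ^ n * ωr)
          = ENNReal.ofReal (κ⁻¹ * (κ⁻¹ * dens y) * d ^ n) * ENNReal.ofReal ωr := by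
            rw [ENNReal.ofReal_mul (mul_nonneg (mul_nonneg (inv_nonneg.2 hκpos.le) (mul_nonneg (inv_nonneg.2 hκpos.le) (dens_nonneg y))) (pow_nonneg hd0 n))]
        _ = ENNReal.ofReal (κ⁻¹ * (κ⁻¹ * dens y) * d ^ n) * ωE := by
            rw [hωrdef, ENNReal.ofReal_toReal hωEfin]
        _ ≤ t := hchain
    have hdn : d ^ n ≤ base := by
      rw [hdensy] at hreal
      rw [hbasedef, le_div_iff₀ hωr]
      calc d ^ n * ωr
          = (κ⁻¹ * (κ⁻¹ * (py⁻¹ * ey⁻¹)) * d ^ n * ωr) * (κ ^ 2 * py * ey) := by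
            have hκne : κ ≠ 0 := hκpos.ne'
            have hpyne : py ≠ 0 := hpypos.ne'
            have heyne : ey ≠ 0 := heypos.ne'
            field_simp
        _ ≤ t.toReal * (κ ^ 2 * py * ey) :=
            mul_le_mul_of_nonneg_right hreal (by positivity)
        _ = t.toReal * ey * κ ^ 2 * py := by ring
    have hdρ₀ : d ≤ ρ₀ := by
      rw [← hρ₀n] at hdn
      exact (pow_le_pow_iff_left₀ hd0 hρ₀0 hn).1 hdn
    exact mem_closedBall.2 (le_min hdρ₀ hdmy)
  -- conclude
  calc gauss n {x : EuclideanSpace ℝ (Fin n) |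
        dist x y < a * mfun x ∧ gauss n (ball x (dist x y)) ≤ t}
      ≤ gauss n (closedBall y ρ) := measure_mono key
    _ ≤ ENNReal.ofReal (κ * dens y * ρ ^ n) * ωE :=
        gauss_closedBall_le hb0 y hρ0 (min_le_right _ _)
    _ ≤ ENNReal.ofReal (κ * dens y * base) * ENNReal.ofReal ωr := by
        rw [hωrdef, ENNReal.ofReal_toReal hωEfin]
        refine mul_le_mul_left (ENNReal.ofReal_le_ofReal ?_) _
        refine mul_le_mul_of_nonneg_left ?_ (mul_nonneg hκpos.le (dens_nonneg y))
        rw [← hρ₀n]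
        exact pow_le_pow_left₀ hρ0 (min_le_left _ _) n
    _ = ENNReal.ofReal (κ * dens y * base * ωr) := by
        rw [← ENNReal.ofReal_mul (mul_nonneg (mul_nonneg hκpos.le (dens_nonneg y)) hbase)]
    _ = ENNReal.ofReal (κ ^ 3 * t.toReal) := by
        congr 1
        rw [hdensy, hbasedef]
        field_simp
    _ = ENNReal.ofReal (κ ^ 3) * t := by
        rw [ENNReal.ofReal_mul (pow_pos hκpos 3).le, ENNReal.ofReal_toReal ht]

lemma measurable_mfun : Measurable fun x : EuclideanSpace ℝ (Fin n) => mfun x :=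
  measurable_const.min measurable_norm.inv

instance (n : ℕ) : SFinite (gauss n) := by unfold gauss; infer_instance

lemma measurable_gaussBall :
    Measurable fun p : (EuclideanSpace ℝ (Fin n)) × (EuclideanSpace ℝ (Fin n)) =>
      gauss n (ball p.1 (dist p.1 p.2)) := by
  have hS : MeasurableSet {q : ((EuclideanSpace ℝ (Fin n)) × (EuclideanSpace ℝ (Fin n))) ×
      (EuclideanSpace ℝ (Fin n)) | dist q.1.1 q.2 < dist q.1.1 q.1.2} :=
    measurableSet_lt (measurable_fst.fst.dist measurable_snd)
      (measurable_fst.fst.dist measurable_fst.snd)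
  have h : (fun p : (EuclideanSpace ℝ (Fin n)) × (EuclideanSpace ℝ (Fin n)) =>
      gauss n (ball p.1 (dist p.1 p.2))) =
      fun p => ∫⁻ z, Set.indicator {q : ((EuclideanSpace ℝ (Fin n)) ×
        (EuclideanSpace ℝ (Fin n))) × (EuclideanSpace ℝ (Fin n)) |
        dist q.1.1 q.2 < dist q.1.1 q.1.2}
        (fun _ => (1:ℝ≥0∞)) (p, z) ∂gauss n := by
    funext p
    have heq : (fun z => Set.indicator {q : ((EuclideanSpace ℝ (Fin n)) ×
        (EuclideanSpace ℝ (Fin n))) × (EuclideanSpace ℝ (Fin n)) |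
        dist q.1.1 q.2 < dist q.1.1 q.1.2} (fun _ => (1:ℝ≥0∞)) (p, z)) =
        Set.indicator (ball p.1 (dist p.1 p.2)) (fun _ => (1:ℝ≥0∞)) := by
      funext z
      simp only [Set.indicator_apply, Set.mem_setOf_eq]
      by_cases hz : dist p.1 z < dist p.1 p.2
      · rw [if_pos hz, Set.indicator_of_mem (mem_ball.2 (by rw [dist_comm]; exact hz))]
      · rw [if_neg hz, Set.indicator_of_notMem
          (fun hmem => hz (by rw [dist_comm]; exact mem_ball.1 hmem))]
    rw [heq]
    exact (lintegral_indicator_one measurableSet_ball).symm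
  rw [h]
  exact Measurable.lintegral_prod_right' ((measurable_const).indicator hS)

lemma measurable_V (y : EuclideanSpace ℝ (Fin n)) :
    Measurable fun x : EuclideanSpace ℝ (Fin n) => gauss n (ball x (dist x y)) := by
  have h : (fun x : EuclideanSpace ℝ (Fin n) => gauss n (ball x (dist x y))) =
      (fun p : (EuclideanSpace ℝ (Fin n)) × (EuclideanSpace ℝ (Fin n)) =>
        gauss n (ball p.1 (dist p.1 p.2))) ∘ (fun x => (x, y)) := rfl
  rw [h]
  exact measurable_gaussBall.comp (measurable_id.prodMk measurable_const)

lemma rpow_anti {β : ℝ} (hβ : β ≤ 1) {u v : ℝ≥0∞} (huv : u ≤ v) : v ^ (β - 1) ≤ u ^ (β - 1) := by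
  rw [show β - 1 = -(1 - β) by ring, ENNReal.rpow_neg, ENNReal.rpow_neg]
  exact ENNReal.inv_le_inv.2 (ENNReal.rpow_le_rpow huv (by linarith))

/-- The key inner estimate: the truncated-kernel integral is `≲ s ^ β`. -/
lemma inner_est (hn : n ≠ 0) {a β : ℝ} (ha : 0 < a) (hβ : β ∈ Set.Ioo (0:ℝ) 1)
    {y : EuclideanSpace ℝ (Fin n)} (hy : y ≠ 0) {s : ℝ≥0∞} (hs0 : s ≠ 0) (hst : s ≠ ∞) :
    ∫⁻ x in {x | dist x y < a * mfun x ∧ gauss n (ball x (dist x y)) ≤ s},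
        (gauss n (ball x (dist x y))) ^ (β - 1) ∂gauss n ≤
      (ENNReal.ofReal ((Real.exp (2 * (a * (1 + a)) + (a * (1 + a)) ^ 2)) ^ 3) *
          (2:ℝ≥0∞) ^ ((1:ℝ) - β) * (1 - (2:ℝ≥0∞) ^ (-β))⁻¹) * s ^ β := by
  set b : ℝ := a * (1 + a) with hbdef
  have hb0 : (0:ℝ) ≤ b := by nlinarith
  have hab : a ≤ b := by nlinarith
  set C₂ : ℝ≥0∞ := ENNReal.ofReal ((Real.exp (2 * b + b ^ 2)) ^ 3) with hC₂def
  set Vx : EuclideanSpace ℝ (Fin n) → ℝ≥0∞ := fun x => gauss n (ball x (dist x y)) with hVxdef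
  have hVmeas : Measurable Vx := measurable_V y
  set T : ℕ → ℝ≥0∞ := fun k => s * 2⁻¹ ^ k with hTdef
  set A : ℕ → Set (EuclideanSpace ℝ (Fin n)) := fun k =>
    {x | (dist x y < a * mfun x ∧ Vx x ≤ T k) ∧ T (k + 1) < Vx x} with hAdef
  set Z : Set (EuclideanSpace ℝ (Fin n)) := {x | dist x y < a * mfun x ∧ Vx x = 0} with hZdef
  -- covering
  have cover : {x | dist x y < a * mfun x ∧ Vx x ≤ s} ⊆ Z ∪ ⋃ k, A k := by
    intro x hx
    obtain ⟨hd, hV⟩ := hx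
    by_cases hV0 : Vx x = 0
    · exact Or.inl ⟨hd, hV0⟩
    · right
      have hex : ∃ k, T (k + 1) < Vx x := by
        obtain ⟨k, hk⟩ := ENNReal.exists_inv_two_pow_lt
          (show Vx x / s ≠ 0 by
            rw [ENNReal.div_ne_zero]; exact ⟨hV0, hst⟩)
        have hk' : T k < Vx x := by
          rw [hTdef]
          have := (ENNReal.lt_div_iff_mul_lt (Or.inl hs0) (Or.inl hst)).1 hk
          rw [mul_comm] at this
          exact this
        exact ⟨k, lt_of_le_of_lt
          (mul_le_mul_right (pow_le_pow_of_le_one zero_le' (by simp) (Nat.le_succ k)) s) hk'⟩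
      set k₀ := Nat.find hex with hk₀def
      refine Set.mem_iUnion.2 ⟨k₀, ⟨⟨hd, ?_⟩, Nat.find_spec hex⟩⟩
      rcases Nat.eq_zero_or_pos k₀ with h0 | hpos
      · rw [h0]; simpa [hTdef] using hV
      · obtain ⟨m, hm⟩ := Nat.exists_eq_succ_of_ne_zero hpos.ne'
        have := Nat.find_min hex (m := m) (by omega)
        rw [hm]
        exact not_lt.1 this
  -- Z is null
  have hZnull : gauss n Z = 0 := by
    refine measure_mono_null ?_ (gauss_singleton hn y)
    intro x hx
    obtain ⟨hd, h0⟩ := hx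
    by_contra hxy
    have hdpos : (0:ℝ) < dist x y := dist_pos.2 hxy
    have hdb : dist x y ≤ b * mfun x :=
      hd.le.trans (mul_le_mul_of_nonneg_right hab (mfun_nonneg x))
    have hlow := le_gauss_ball hn hb0 x hdpos.le hdb
    rw [show gauss n (ball x (dist x y)) = Vx x from rfl, h0, le_zero_iff] at hlow
    have hpos : 0 < ENNReal.ofReal ((Real.exp (2 * b + b ^ 2))⁻¹ * dens x * dist x y ^ n) *
        volume (ball (0 : EuclideanSpace ℝ (Fin n)) 1) := by
      apply ENNReal.mul_pos
      · refine (ENNReal.ofReal_pos.2 ?_).ne'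
        have := dens_pos x
        positivity
      · exact (measure_ball_pos volume 0 one_pos).ne'
    exact hpos.ne' hlow
  -- measurability of the pieces
  have hAmeas : ∀ k, MeasurableSet (A k) := by
    intro k
    have h1 : MeasurableSet {x : EuclideanSpace ℝ (Fin n) | dist x y < a * mfun x} :=
      measurableSet_lt (measurable_id.dist measurable_const)
        (measurable_const.mul measurable_mfun)
    have h2 : MeasurableSet {x | Vx x ≤ T k} := measurableSet_le hVmeas measurable_const
    have h3 : MeasurableSet {x | T (k + 1) < Vx x} := measurableSet_lt measurable_const hVmeas
    exact ((h1.inter h2).inter h3)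
  -- main estimate
  have hr1 : (2:ℝ≥0∞) ≠ 0 := two_ne_zero
  have hr2 : (2:ℝ≥0∞) ≠ ∞ := ofNat_ne_top
  have hpow : ∀ m : ℕ, ((2:ℝ≥0∞)⁻¹) ^ m = (2:ℝ≥0∞) ^ (-(m:ℝ)) := by
    intro m
    rw [ENNReal.rpow_neg, ENNReal.rpow_natCast, ENNReal.inv_pow]
  have term_bound : ∀ k : ℕ, T (k + 1) ^ (β - 1) * (C₂ * T k) =
      C₂ * (2:ℝ≥0∞) ^ ((1:ℝ) - β) * s ^ β * ((2:ℝ≥0∞) ^ (-β)) ^ k := by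
    intro k
    have e1 : T (k + 1) ^ (β - 1) = s ^ (β - 1) * (2:ℝ≥0∞) ^ ((-(((k:ℝ) + 1))) * (β - 1)) := by
      rw [hTdef]
      simp only []
      rw [hpow (k + 1), ENNReal.mul_rpow_of_ne_top hst (by
        simp [ENNReal.rpow_eq_top_iff, hr1, hr2] : (2:ℝ≥0∞) ^ (-(((k:ℕ)+1:ℕ):ℝ)) ≠ ∞),
        ← ENNReal.rpow_mul]
      norm_num
    have e2 : T k = s * (2:ℝ≥0∞) ^ (-(k:ℝ)) := by rw [hTdef]; simp only []; rw [hpow k]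
    rw [e1, e2]
    have hsplit : s ^ (β - 1) * s = s ^ β := by
      nth_rewrite 2 [show s = s ^ (1:ℝ) by rw [ENNReal.rpow_one]]
      rw [← ENNReal.rpow_add _ _ hs0 hst]
      norm_num
    have hexp : (2:ℝ≥0∞) ^ ((-(((k:ℝ)) + 1)) * (β - 1)) * (2:ℝ≥0∞) ^ (-(k:ℝ)) =
        (2:ℝ≥0∞) ^ ((1:ℝ) - β) * ((2:ℝ≥0∞) ^ (-β)) ^ k := by
      rw [← ENNReal.rpow_natCast ((2:ℝ≥0∞) ^ (-β)) k, ← ENNReal.rpow_mul,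
        ← ENNReal.rpow_add _ _ hr1 hr2, ← ENNReal.rpow_add _ _ hr1 hr2]
      congr 1
      ring
    calc s ^ (β - 1) * (2:ℝ≥0∞) ^ ((-((k:ℝ) + 1)) * (β - 1)) *
          (C₂ * (s * (2:ℝ≥0∞) ^ (-(k:ℝ))))
        = C₂ * (s ^ (β - 1) * s) *
            ((2:ℝ≥0∞) ^ ((-((k:ℝ) + 1)) * (β - 1)) * (2:ℝ≥0∞) ^ (-(k:ℝ))) := by ring
      _ = C₂ * s ^ β * ((2:ℝ≥0∞) ^ ((1:ℝ) - β) * ((2:ℝ≥0∞) ^ (-β)) ^ k) := by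
          rw [hsplit, hexp]
      _ = C₂ * (2:ℝ≥0∞) ^ ((1:ℝ) - β) * s ^ β * ((2:ℝ≥0∞) ^ (-β)) ^ k := by ring
  calc ∫⁻ x in {x | dist x y < a * mfun x ∧ Vx x ≤ s}, (Vx x) ^ (β - 1) ∂gauss n
      ≤ ∫⁻ x in Z ∪ ⋃ k, A k, (Vx x) ^ (β - 1) ∂gauss n := lintegral_mono_set cover
    _ ≤ (∫⁻ x in Z, (Vx x) ^ (β - 1) ∂gauss n) +
          ∫⁻ x in ⋃ k, A k, (Vx x) ^ (β - 1) ∂gauss n := lintegral_union_le _ _ _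
    _ = ∫⁻ x in ⋃ k, A k, (Vx x) ^ (β - 1) ∂gauss n := by
        rw [Measure.restrict_eq_zero.2 hZnull, lintegral_zero_measure, zero_add]
    _ ≤ ∑' k, ∫⁻ x in A k, (Vx x) ^ (β - 1) ∂gauss n := lintegral_iUnion_le _ _
    _ ≤ ∑' k, T (k + 1) ^ (β - 1) * (C₂ * T k) := by
        refine ENNReal.tsum_le_tsum fun k => ?_
        calc ∫⁻ x in A k, (Vx x) ^ (β - 1) ∂gauss n
            ≤ ∫⁻ _ in A k, T (k + 1) ^ (β - 1) ∂gauss n := by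
              refine setLIntegral_mono' (hAmeas k) fun x hx => ?_
              exact rpow_anti hβ.2.le hx.2.le
          _ = T (k + 1) ^ (β - 1) * gauss n (A k) := setLIntegral_const _ _
          _ ≤ T (k + 1) ^ (β - 1) * (C₂ * T k) := by
              refine mul_le_mul_right ?_ _
              refine le_trans (measure_mono ?_) (measure_Et hn ha hy (T k))
              exact fun x hx => hx.1
    _ = ∑' k, C₂ * (2:ℝ≥0∞) ^ ((1:ℝ) - β) * s ^ β * ((2:ℝ≥0∞) ^ (-β)) ^ k := by
        exact tsum_congr term_bound
    _ = C₂ * (2:ℝ≥0∞) ^ ((1:ℝ) - β) * s ^ β * (1 - (2:ℝ≥0∞) ^ (-β))⁻¹ := by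
        rw [ENNReal.tsum_mul_left, ENNReal.tsum_geometric]
    _ = (C₂ * (2:ℝ≥0∞) ^ ((1:ℝ) - β) * (1 - (2:ℝ≥0∞) ^ (-β))⁻¹) * s ^ β := by ring

end Stmt9


/-- The local fractional integral of `|f|`:
`I_a^β(|f|)(x) = ∫_{B(x, a m(x))} |f(y)| / V(x,y)^{1-β} dγ(y)`, with
`V(x,y) = γ(B(x,|x-y|))`. -/
noncomputable def fracInt (n : ℕ) (a β : ℝ) (f : EuclideanSpace ℝ (Fin n) → ℝ)
    (x : EuclideanSpace ℝ (Fin n)) : ℝ≥0∞ :=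
  ∫⁻ y in ball x (a * mfun x),
    ‖f y‖₊ * gauss n (ball x (dist x y)) ^ (β - 1) ∂gauss n

open Stmt9 in
/-- Weak-type boundedness of the local fractional integral. -/
theorem stmt9 (n : ℕ) (a β : ℝ) (ha : 0 < a) (hβ : β ∈ Set.Ioo (0 : ℝ) 1) :
    ∃ C : ℝ, 0 < C ∧
      ∀ f : EuclideanSpace ℝ (Fin n) → ℝ, MemLp f 1 (gauss n) →
        ∀ lam : ℝ, 0 < lam →
          gauss n {x | ENNReal.ofReal lam < fracInt n a β f x} ≤
            ENNReal.ofReal C *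
              (eLpNorm f 1 (gauss n) / ENNReal.ofReal lam) ^ (1 / (1 - β)) := by
  classical
  obtain ⟨hβ0, hβ1⟩ := hβ
  have h1β : (0:ℝ) < 1 - β := by linarith
  by_cases hn : n = 0
  · -- degenerate case: the region of integration is empty
    subst hn
    refine ⟨1, one_pos, fun f hf lam hlam => ?_⟩
    have hempty : ∀ x : EuclideanSpace ℝ (Fin 0), fracInt 0 a β f x = 0 := by
      intro x
      have hx : ‖x‖ = 0 := by
        have : x = 0 := Subsingleton.elim x 0
        simp [this]
      have hm : mfun x = 0 := by simp [mfun, hx]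
      rw [fracInt, hm, mul_zero, Metric.ball_zero, Measure.restrict_empty,
        lintegral_zero_measure]
    have hset : {x : EuclideanSpace ℝ (Fin 0) | ENNReal.ofReal lam < fracInt 0 a β f x} = ∅ := by
      ext x
      simp [hempty x]
    rw [hset]
    simp
  · -- main case
    set b : ℝ := a * (1 + a) with hbdef
    set A : ℝ≥0∞ := ENNReal.ofReal ((Real.exp (2 * b + b ^ 2)) ^ 3) *
        (2:ℝ≥0∞) ^ ((1:ℝ) - β) * (1 - (2:ℝ≥0∞) ^ (-β))⁻¹ with hAdef
    have hA : A ≠ ∞ := by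
      have h2β : (2:ℝ≥0∞) ^ (-β) < 1 := by
        have : ((2:ℝ≥0∞)) = ENNReal.ofReal (2:ℝ) := by norm_num
        rw [this, ENNReal.ofReal_rpow_of_pos (by norm_num)]
        exact ENNReal.ofReal_lt_one.2 (Real.rpow_lt_one_of_one_lt_of_neg one_lt_two (by linarith))
      refine ENNReal.mul_ne_top (ENNReal.mul_ne_top ENNReal.ofReal_ne_top
        (ENNReal.rpow_ne_top_of_nonneg (by linarith) ofNat_ne_top)) ?_
      rw [ENNReal.inv_ne_top]
      intro hcontr
      rw [tsub_eq_zero_iff_le] at hcontr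
      exact absurd hcontr (not_le.2 h2β)
    set A' : ℝ≥0∞ := 2 * A * (2:ℝ≥0∞) ^ ((1/(1-β)) * β) with hA'def
    have hA' : A' ≠ ∞ := by
      refine ENNReal.mul_ne_top (ENNReal.mul_ne_top ofNat_ne_top hA) ?_
      exact ENNReal.rpow_ne_top_of_nonneg (by positivity) ofNat_ne_top
    set C : ℝ := A'.toReal + 1 with hCdef
    have hC : 0 < C := by positivity
    have hA'le : A' ≤ ENNReal.ofReal C := by
      conv_lhs => rw [← ENNReal.ofReal_toReal hA']
      exact ENNReal.ofReal_le_ofReal (by rw [hCdef]; linarith)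
    refine ⟨C, hC, fun f hf lam hlam => ?_⟩
    -- replace f by a measurable representative
    set g : EuclideanSpace ℝ (Fin n) → ℝ := hf.aestronglyMeasurable.mk f with hgdef
    have hg : StronglyMeasurable g := hf.aestronglyMeasurable.stronglyMeasurable_mk
    have hgm : Measurable g := hg.measurable
    have hfg : f =ᵐ[gauss n] g := hf.aestronglyMeasurable.ae_eq_mk
    have hfrac : ∀ x, fracInt n a β f x = fracInt n a β g x := by
      intro x
      simp only [fracInt]
      refine lintegral_congr_ae ?_
      filter_upwards [ae_restrict_of_ae hfg] with y hy
      rw [hy]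
    have hsetg : {x | ENNReal.ofReal lam < fracInt n a β f x} =
        {x | ENNReal.ofReal lam < fracInt n a β g x} := by
      ext x; simp only [Set.mem_setOf_eq, hfrac x]
    have hLp : eLpNorm f 1 (gauss n) = eLpNorm g 1 (gauss n) := eLpNorm_congr_ae hfg
    rw [hsetg, hLp]
    set N : ℝ≥0∞ := eLpNorm g 1 (gauss n) with hNdef
    have hNt : N ≠ ∞ := by
      have := hf.2.ne
      rw [hLp] at this
      exact this
    have hNrepr : N = ∫⁻ y, ‖g y‖₊ ∂gauss n := eLpNorm_one_eq_lintegral_enorm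
    by_cases hN0 : N = 0
    · -- trivial case : g vanishes a.e.
      have hg0 : ∀ᵐ y ∂gauss n, g y = 0 := by
        have := hN0
        rw [hNrepr, lintegral_eq_zero_iff hgm.nnnorm.coe_nnreal_ennreal] at this
        filter_upwards [this] with y hy
        simpa using hy
      have hfr0 : ∀ x, fracInt n a β g x = 0 := by
        intro x
        rw [fracInt]
        have hz : ∀ᵐ y ∂(gauss n).restrict (ball x (a * mfun x)),
            (‖g y‖₊ : ℝ≥0∞) * gauss n (ball x (dist x y)) ^ (β - 1) = 0 := by
          filter_upwards [ae_restrict_of_ae hg0] with y hy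
          simp [hy]
        rw [lintegral_congr_ae hz, lintegral_zero]
      have hset0 : {x | ENNReal.ofReal lam < fracInt n a β g x} = ∅ := by
        ext x; simp [hfr0 x]
      rw [hset0]
      simp
    · -- the heart of the matter
      set lam' : ℝ≥0∞ := ENNReal.ofReal lam with hlamdef
      have hlam0 : lam' ≠ 0 := (ENNReal.ofReal_pos.2 hlam).ne'
      have hlamt : lam' ≠ ∞ := ENNReal.ofReal_ne_top
      have h2N0 : 2 * N / lam' ≠ 0 :=
        ENNReal.div_ne_zero.2 ⟨mul_ne_zero two_ne_zero hN0, hlamt⟩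
      have h2Nt : 2 * N / lam' ≠ ∞ :=
        (ENNReal.div_lt_top (ENNReal.mul_ne_top ofNat_ne_top hNt) hlam0).ne
      set s : ℝ≥0∞ := (2 * N / lam') ^ (1 / (1 - β)) with hsdef
      have hs0 : s ≠ 0 := by
        rw [hsdef]
        exact (ENNReal.rpow_pos (pos_iff_ne_zero.2 h2N0) h2Nt).ne'
      have hst : s ≠ ∞ := by
        rw [hsdef]
        exact ENNReal.rpow_ne_top_of_nonneg (by positivity) h2Nt
      have hs_half : s ^ (β - 1) * N = lam' / 2 := by
        have e1 : s ^ (β - 1) = (2 * N / lam')⁻¹ := by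
          rw [hsdef, ← ENNReal.rpow_mul]
          have : 1 / (1 - β) * (β - 1) = -1 := by
            field_simp
            ring
          rw [this, ENNReal.rpow_neg_one]
        rw [e1, ENNReal.inv_div (Or.inl hlamt) (Or.inl hlam0)]
        rw [div_eq_mul_inv, ENNReal.mul_inv (Or.inl two_ne_zero) (Or.inl ofNat_ne_top)]
        calc lam' * (2⁻¹ * N⁻¹) * N = lam' * 2⁻¹ * (N⁻¹ * N) := by ring
          _ = lam' / 2 := by rw [ENNReal.inv_mul_cancel hN0 hNt, mul_one, div_eq_mul_inv]
      -- the truncation set and truncated operator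
      set S : Set ((EuclideanSpace ℝ (Fin n)) × (EuclideanSpace ℝ (Fin n))) :=
        {p | dist p.1 p.2 < a * mfun p.1} ∩
          {p | gauss n (ball p.1 (dist p.1 p.2)) ≤ s} with hSdef
      have hSmeas : MeasurableSet S := by
        refine MeasurableSet.inter ?_ ?_
        · exact measurableSet_lt (measurable_fst.dist measurable_snd)
            (measurable_const.mul (measurable_mfun.comp measurable_fst))
        · exact measurableSet_le measurable_gaussBall measurable_const
      set G : ((EuclideanSpace ℝ (Fin n)) × (EuclideanSpace ℝ (Fin n))) → ℝ≥0∞ := fun p =>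
        (‖g p.2‖₊ : ℝ≥0∞) * Set.indicator S
          (fun q => (gauss n (ball q.1 (dist q.1 q.2))) ^ (β - 1)) p with hGdef
      have hGmeas : Measurable G := by
        refine Measurable.mul ?_ ?_
        · exact (hgm.comp measurable_snd).nnnorm.coe_nnreal_ennreal
        · exact (measurable_gaussBall.pow_const (β - 1)).indicator hSmeas
      set I1 : EuclideanSpace ℝ (Fin n) → ℝ≥0∞ := fun x => ∫⁻ y, G (x, y) ∂gauss n with hI1def
      have hI1meas : Measurable I1 := hGmeas.lintegral_prod_right'
      -- pointwise splitting of the fractional integral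
      have hpt : ∀ x, fracInt n a β g x ≤ I1 x + lam' / 2 := by
        intro x
        have hrepr : fracInt n a β g x = ∫⁻ y, (ball x (a * mfun x)).indicator
            (fun y => (‖g y‖₊ : ℝ≥0∞) * gauss n (ball x (dist x y)) ^ (β - 1)) y ∂gauss n := by
          rw [fracInt, lintegral_indicator measurableSet_ball]
        rw [hrepr]
        have hb : ∀ y, (ball x (a * mfun x)).indicator
            (fun y => (‖g y‖₊ : ℝ≥0∞) * gauss n (ball x (dist x y)) ^ (β - 1)) y ≤
            G (x, y) + (‖g y‖₊ : ℝ≥0∞) * s ^ (β - 1) := by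
          intro y
          by_cases hy : y ∈ ball x (a * mfun x)
          · rw [Set.indicator_of_mem hy]
            have hd : dist x y < a * mfun x := by
              rw [dist_comm]; exact mem_ball.1 hy
            by_cases hV : gauss n (ball x (dist x y)) ≤ s
            · have hmem : (x, y) ∈ S := ⟨hd, hV⟩
              refine le_trans (le_of_eq ?_) le_self_add
              rw [hGdef]
              simp only [Set.indicator_of_mem hmem]
            · have hK : gauss n (ball x (dist x y)) ^ (β - 1) ≤ s ^ (β - 1) :=
                rpow_anti hβ1.le (not_le.1 hV).le
              exact le_trans (mul_le_mul_right hK _) le_add_self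
          · rw [Set.indicator_of_notMem hy]
            exact zero_le
        calc ∫⁻ y, (ball x (a * mfun x)).indicator
              (fun y => (‖g y‖₊ : ℝ≥0∞) * gauss n (ball x (dist x y)) ^ (β - 1)) y ∂gauss n
            ≤ ∫⁻ y, (G (x, y) + (‖g y‖₊ : ℝ≥0∞) * s ^ (β - 1)) ∂gauss n := lintegral_mono hb
          _ = I1 x + ∫⁻ y, (‖g y‖₊ : ℝ≥0∞) * s ^ (β - 1) ∂gauss n := by
              rw [lintegral_add_left
                (show Measurable fun y => G (x, y) from hGmeas.comp measurable_prodMk_left)]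
          _ = I1 x + lam' / 2 := by
              rw [lintegral_mul_const _ hgm.nnnorm.coe_nnreal_ennreal, ← hNrepr,
                mul_comm, hs_half]
      -- passing to the superlevel set of the truncated operator
      have hsubset : {x | lam' < fracInt n a β g x} ⊆ {x | lam' / 2 ≤ I1 x} := by
        intro x hx
        rw [Set.mem_setOf_eq] at hx ⊢
        by_contra hI
        push_neg at hI
        have h2 : I1 x + lam' / 2 < lam' := by
          conv_rhs => rw [← ENNReal.add_halves lam']
          exact ENNReal.add_lt_add_right (ENNReal.div_lt_top hlamt two_ne_zero).ne hI
        exact absurd (hx.trans_le (hpt x)) (not_lt.2 h2.le)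
      have hhalf0 : lam' / 2 ≠ 0 := by
        simp only [ne_eq, ENNReal.div_eq_zero_iff]
        push_neg
        exact ⟨hlam0, ofNat_ne_top⟩
      -- Chebyshev
      have hcheb : lam' / 2 * gauss n {x | lam' / 2 ≤ I1 x} ≤ ∫⁻ x, I1 x ∂gauss n :=
        mul_meas_ge_le_lintegral₀ hI1meas.aemeasurable _
      -- Tonelli and the inner estimate
      have hswap : ∫⁻ x, I1 x ∂gauss n = ∫⁻ y, ∫⁻ x, G (x, y) ∂gauss n ∂gauss n :=
        lintegral_lintegral_swap hGmeas.aemeasurable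
      have hinner : ∀ y : EuclideanSpace ℝ (Fin n), y ≠ 0 →
          ∫⁻ x, G (x, y) ∂gauss n ≤ (‖g y‖₊ : ℝ≥0∞) * (A * s ^ β) := by
        intro y hy
        have hslice : (fun x => G (x, y)) = fun x => (‖g y‖₊ : ℝ≥0∞) *
            Set.indicator {x | dist x y < a * mfun x ∧ gauss n (ball x (dist x y)) ≤ s}
              (fun x => (gauss n (ball x (dist x y))) ^ (β - 1)) x := rfl
        rw [hslice, lintegral_const_mul' _ _ coe_ne_top]
        refine mul_le_mul_right ?_ _
        have hsetm : MeasurableSet {x : EuclideanSpace ℝ (Fin n) |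
            dist x y < a * mfun x ∧ gauss n (ball x (dist x y)) ≤ s} := by
          rw [Set.setOf_and]
          exact (measurableSet_lt (measurable_id.dist measurable_const)
            (measurable_const.mul measurable_mfun)).inter
            (measurableSet_le (measurable_V y) measurable_const)
        rw [lintegral_indicator hsetm]
        exact inner_est hn ha ⟨hβ0, hβ1⟩ hy hs0 hst
      have hinner_ae : ∀ᵐ y ∂gauss n,
          ∫⁻ x, G (x, y) ∂gauss n ≤ (‖g y‖₊ : ℝ≥0∞) * (A * s ^ β) := by
        rw [ae_iff]
        refine measure_mono_null ?_ (gauss_singleton hn 0)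
        intro y hy
        rw [Set.mem_setOf_eq] at hy
        rw [Set.mem_singleton_iff]
        by_contra hy0
        exact hy (hinner y hy0)
      have htonelli : ∫⁻ x, I1 x ∂gauss n ≤ A * s ^ β * N := by
        rw [hswap]
        calc ∫⁻ y, ∫⁻ x, G (x, y) ∂gauss n ∂gauss n
            ≤ ∫⁻ y, (‖g y‖₊ : ℝ≥0∞) * (A * s ^ β) ∂gauss n := lintegral_mono_ae hinner_ae
          _ = (∫⁻ y, (‖g y‖₊ : ℝ≥0∞) ∂gauss n) * (A * s ^ β) :=
              lintegral_mul_const _ hgm.nnnorm.coe_nnreal_ennreal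
          _ = A * s ^ β * N := by rw [← hNrepr]; ring
      -- putting everything together
      have hmain : gauss n {x | lam' < fracInt n a β g x} ≤
          (lam' / 2)⁻¹ * (A * s ^ β * N) := by
        refine le_trans (measure_mono hsubset) ?_
        have : gauss n {x | lam' / 2 ≤ I1 x} =
            (lam' / 2)⁻¹ * (lam' / 2 * gauss n {x | lam' / 2 ≤ I1 x}) := by
          rw [← mul_assoc, ENNReal.inv_mul_cancel hhalf0
            (ENNReal.div_lt_top hlamt two_ne_zero).ne, one_mul]
        rw [this]
        exact mul_le_mul_right (hcheb.trans htonelli) _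
      -- final arithmetic
      have hD0 : N / lam' ≠ 0 := ENNReal.div_ne_zero.2 ⟨hN0, hlamt⟩
      have hDt : N / lam' ≠ ∞ := (ENNReal.div_lt_top hNt hlam0).ne
      have harit : (lam' / 2)⁻¹ * (A * s ^ β * N) ≤
          ENNReal.ofReal C * (N / lam') ^ (1 / (1 - β)) := by
        have h1 : (lam' / 2)⁻¹ = 2 / lam' := ENNReal.inv_div (Or.inl ofNat_ne_top) (Or.inl two_ne_zero)
        have h2 : s ^ β = (2:ℝ≥0∞) ^ ((1 / (1 - β)) * β) * (N / lam') ^ ((1 / (1 - β)) * β) := by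
          rw [hsdef, ← ENNReal.rpow_mul, mul_div_assoc,
            ENNReal.mul_rpow_of_ne_top ofNat_ne_top hDt]
        have h3 : (N / lam') ^ ((1 / (1 - β)) * β) * (N / lam') =
            (N / lam') ^ (1 / (1 - β)) := by
          have e : (1 / (1 - β)) * β + 1 = 1 / (1 - β) := by
            field_simp
            ring
          calc (N / lam') ^ ((1 / (1 - β)) * β) * (N / lam')
              = (N / lam') ^ ((1 / (1 - β)) * β) * (N / lam') ^ (1:ℝ) := by
                rw [ENNReal.rpow_one]
            _ = (N / lam') ^ ((1 / (1 - β)) * β + 1) := by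
                rw [← ENNReal.rpow_add _ _ hD0 hDt]
            _ = (N / lam') ^ (1 / (1 - β)) := by rw [e]
        calc (lam' / 2)⁻¹ * (A * s ^ β * N)
            = (2 * A * (2:ℝ≥0∞) ^ ((1 / (1 - β)) * β)) *
                ((N / lam') ^ ((1 / (1 - β)) * β) * (N * lam'⁻¹)) := by
              rw [h1, h2, div_eq_mul_inv 2 lam']
              ring
          _ = A' * (N / lam') ^ (1 / (1 - β)) := by
              rw [← div_eq_mul_inv N lam', h3, hA'def]
          _ ≤ ENNReal.ofReal C * (N / lam') ^ (1 / (1 - β)) := mul_le_mul_left hA'le _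
      exact hmain.trans harit
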